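/- Let P be an S×S complex positive semidefinite matrix, R_eff an N×N complex positive definite matrix, Q an S×S complex Hermitian matrix, A an S×S complex matrix, and G an S×N complex matrix. Set M = R_eff + Gᴴ P G (which is positive definite, hence invertible) and K* = −M⁻¹ Gᴴ P A. Then for every N×S complex matrix K, Q + (K*)ᴴ R_eff K* + (A + G K*)ᴴ P (A + G K*) ⪯ Q + Kᴴ R_eff K + (A + G K)ᴴ P (A + G K) in the Loewner order. (This is the policy-improvement inequality in the proof of Theorem 4.) -/
import Mathlib


open Matrix ComplexOrder

set_option maxHeartbeats 1000000

/-- Policy-improvement inequality (proof of Theorem 4): with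
`M = R_eff + Gᴴ P G` and `K* = −M⁻¹ Gᴴ P A`, the gain `K*` minimizes
`Q + Kᴴ R_eff K + (A + G K)ᴴ P (A + G K)` in the Loewner order. -/
theorem policy_improvement_loewner {S N : ℕ}
    (P : Matrix (Fin S) (Fin S) ℂ) (hP : P.PosSemidef)
    (Reff : Matrix (Fin N) (Fin N) ℂ) (hReff : Reff.PosDef)
    (Q : Matrix (Fin S) (Fin S) ℂ) (hQ : Q.IsHermitian)
    (A : Matrix (Fin S) (Fin S) ℂ) (G : Matrix (Fin S) (Fin N) ℂ)
    (K : Matrix (Fin N) (Fin S) ℂ) :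
    ((Q + Kᴴ * Reff * K + (A + G * K)ᴴ * P * (A + G * K)) -
      (Q + (-(Reff + Gᴴ * P * G)⁻¹ * Gᴴ * P * A)ᴴ * Reff *
          (-(Reff + Gᴴ * P * G)⁻¹ * Gᴴ * P * A) +
        (A + G * (-(Reff + Gᴴ * P * G)⁻¹ * Gᴴ * P * A))ᴴ * P *
          (A + G * (-(Reff + Gᴴ * P * G)⁻¹ * Gᴴ * P * A)))).PosSemidef := by
  set M : Matrix (Fin N) (Fin N) ℂ := Reff + Gᴴ * P * G with hMdef
  have hM : M.PosDef := hReff.add_posSemidef (hP.conjTranspose_mul_mul_same G)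
  set Ks : Matrix (Fin N) (Fin S) ℂ := -M⁻¹ * Gᴴ * P * A with hKs
  have hinv : M * M⁻¹ = 1 := Matrix.mul_nonsing_inv _ ((isUnit_iff_isUnit_det M).1 hM.isUnit)
  have hMKs : M * Ks = -(Gᴴ * P * A) := by
    rw [hKs]
    simp only [Matrix.neg_mul, Matrix.mul_neg, neg_inj]
    rw [← Matrix.mul_assoc, ← Matrix.mul_assoc, ← Matrix.mul_assoc, hinv, Matrix.one_mul]
  have hKsM : Ksᴴ * M = -(Aᴴ * P * G) := by
    have := congrArg conjTranspose hMKs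
    simpa [Matrix.conjTranspose_mul, hM.isHermitian.eq, hP.isHermitian.eq,
      Matrix.mul_assoc] using this
  have hsym : Aᴴ * (P * (G * Ks)) = Ksᴴ * (Gᴴ * (P * A)) := by
    have h1 : Ksᴴ * M * Ks = -(Aᴴ * P * G) * Ks := by rw [hKsM]
    rw [Matrix.mul_assoc, hMKs, Matrix.mul_neg, Matrix.neg_mul, neg_inj] at h1
    simpa [Matrix.mul_assoc] using h1.symm
  have hquad : Ksᴴ * (Reff * Ks) =
      -(Ksᴴ * (Gᴴ * (P * A))) - Ksᴴ * (Gᴴ * (P * (G * Ks))) := by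
    have h1 : Ksᴴ * (M * Ks) = Ksᴴ * -(Gᴴ * P * A) := by rw [hMKs]
    rw [hMdef] at h1
    simp only [Matrix.add_mul, Matrix.mul_add, Matrix.mul_neg, Matrix.mul_assoc] at h1
    rw [eq_sub_iff_add_eq]
    simpa using h1
  have key : ((Q + Kᴴ * Reff * K + (A + G * K)ᴴ * P * (A + G * K)) -
      (Q + Ksᴴ * Reff * Ks + (A + G * Ks)ᴴ * P * (A + G * Ks))) =
      (K - Ks)ᴴ * M * (K - Ks) := by
    have e1 : (K - Ks)ᴴ * M * (K - Ks) =
        Kᴴ * M * K - Kᴴ * (M * Ks) - (Ksᴴ * M) * K + Ksᴴ * (M * Ks) := by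
      simp only [Matrix.conjTranspose_sub, Matrix.sub_mul, Matrix.mul_sub,
        Matrix.mul_assoc]
      abel
    rw [e1, hMKs, hKsM, hMdef]
    simp only [Matrix.conjTranspose_add, Matrix.conjTranspose_mul,
      Matrix.conjTranspose_conjTranspose, hP.isHermitian.eq, Matrix.add_mul,
      Matrix.mul_add, Matrix.mul_neg, Matrix.neg_mul, Matrix.mul_assoc, hsym, hquad]
    abel
  rw [key]
  exact hM.posSemidef.conjTranspose_mul_mul_same (K - Ks)
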